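/- Let p : ℝ → ℝ be a polynomial of degree at most N−1, and let j ∈ ℕ. Then for every x ∈ ℝ, ∑_{k∈ℤ} p((k+M₁)/2^j) φ(2^j x − k) = p(x); that is, the quasi-interpolation based on φ reproduces all polynomials of degree up to N−1 exactly. -/
import Mathlib


open MeasureTheory

theorem quasiInterp_reproduces_polynomials
    (N : ℕ) (hN : 2 ≤ N) (M₁ : ℝ) (φ : ℝ → ℝ)
    (hφmeas : Measurable φ) (hφbdd : ∃ B, ∀ t, |φ t| ≤ B)
    (hφsupp : ∀ t : ℝ, t ∉ Set.Icc (0 : ℝ) (3 * N - 1) → φ t = 0)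
    (hrep : ∀ y : ℝ, ∀ m : ℕ, m ≤ N - 1 →
      ∑' k : ℤ, ((k : ℝ) + M₁ - y) ^ m * φ (y - (k : ℝ)) = if m = 0 then 1 else 0)
    (p : Polynomial ℝ) (hp : p.natDegree ≤ N - 1) (j : ℕ) (x : ℝ) :
    ∑' k : ℤ, p.eval (((k : ℝ) + M₁) / 2 ^ j) * φ (2 ^ j * x - (k : ℝ)) = p.eval x := by
  set y : ℝ := 2 ^ j * x with hy
  set d : ℕ := p.natDegree with hd
  set S : Finset ℤ := Finset.Icc ⌈y - (3 * N - 1)⌉ ⌊y⌋ with hS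
  have hsupp : ∀ k : ℤ, k ∉ S → φ (y - (k : ℝ)) = 0 := by
    intro k hk
    apply hφsupp
    simp only [hS, Finset.mem_Icc, not_and_or, not_le] at hk
    simp only [Set.mem_Icc, not_and_or, not_le]
    rcases hk with hk | hk
    · right
      have h1 : (k : ℝ) < y - (3 * N - 1) := Int.lt_ceil.mp hk
      linarith
    · left
      have h1 : y < (k : ℝ) := Int.floor_lt.mp hk
      linarith
  have key : ∀ m : ℕ, m ≤ N - 1 →
      ∑ k ∈ S, ((k : ℝ) + M₁ - y) ^ m * φ (y - (k : ℝ)) = if m = 0 then 1 else 0 := by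
    intro m hm
    rw [← hrep y m hm]
    exact (tsum_eq_sum (fun k hk => by rw [hsupp k hk, mul_zero])).symm
  have heval : ∀ k : ℤ, p.eval (((k : ℝ) + M₁) / 2 ^ j) =
      ∑ m ∈ Finset.range (d + 1),
        (Polynomial.taylor x p).coeff m * (((k : ℝ) + M₁ - y) / 2 ^ j) ^ m := by
    intro k
    have h2 : (2 : ℝ) ^ j ≠ 0 := by positivity
    have h1 : ((k : ℝ) + M₁) / 2 ^ j = ((k : ℝ) + M₁ - y) / 2 ^ j + x := by
      field_simp [hy]; ring
    rw [h1, ← Polynomial.taylor_eval x p, Polynomial.eval_eq_sum_range' (n := d + 1)]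
    rw [Polynomial.natDegree_taylor]
    exact Nat.lt_succ_of_le le_rfl
  calc ∑' k : ℤ, p.eval (((k : ℝ) + M₁) / 2 ^ j) * φ (y - (k : ℝ))
      = ∑ k ∈ S, p.eval (((k : ℝ) + M₁) / 2 ^ j) * φ (y - (k : ℝ)) :=
        tsum_eq_sum (fun k hk => by rw [hsupp k hk, mul_zero])
    _ = ∑ k ∈ S, ∑ m ∈ Finset.range (d + 1),
          (Polynomial.taylor x p).coeff m * ((1 : ℝ) / 2 ^ j) ^ m *
            (((k : ℝ) + M₁ - y) ^ m * φ (y - (k : ℝ))) := by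
        refine Finset.sum_congr rfl fun k _ => ?_
        rw [heval k, Finset.sum_mul]
        refine Finset.sum_congr rfl fun m _ => ?_
        rw [div_pow, div_eq_mul_inv, one_div]
        ring
    _ = ∑ m ∈ Finset.range (d + 1), ∑ k ∈ S,
          (Polynomial.taylor x p).coeff m * ((1 : ℝ) / 2 ^ j) ^ m *
            (((k : ℝ) + M₁ - y) ^ m * φ (y - (k : ℝ))) := Finset.sum_comm
    _ = ∑ m ∈ Finset.range (d + 1),
          (Polynomial.taylor x p).coeff m * ((1 : ℝ) / 2 ^ j) ^ m *
            (if m = 0 then (1 : ℝ) else 0) := by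
        refine Finset.sum_congr rfl fun m hm => ?_
        rw [← Finset.mul_sum, key m (le_trans (Nat.lt_succ_iff.mp (Finset.mem_range.mp hm)) hp)]
    _ = (Polynomial.taylor x p).coeff 0 := by
        rw [Finset.sum_eq_single 0]
        · simp
        · intro m _ hm0; simp [hm0]
        · intro h; exact absurd (Finset.mem_range.mpr (Nat.succ_pos d)) h
    _ = p.eval x := Polynomial.taylor_coeff_zero x p
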